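/- Let ξ₂,ξ₃,φ,B,C be real constants with ξ₃≠0. Then the curves x₁(t)=(1/(2ξ₃))cos(2ξ₃t+φ)+ξ₂/ξ₃, x₂(t)=B−(1/(2ξ₃))sin(2ξ₃t+φ), x₃(t)=C+t/(4ξ₃)+(1/(16ξ₃²))sin(2(2ξ₃t+φ))+(ξ₂/(2ξ₃²))sin(2ξ₃t+φ), together with ξ₁(t)=−(1/2)sin(2ξ₃t+φ) and the constant momenta ξ₂,ξ₃, define a global solution of the Heisenberg bicharacteristic system satisfying g*(x(t),ξ(t))=1/4 for all t∈ℝ. -/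

import Mathlib

/-- The Heisenberg bicharacteristic system: the Hamiltonian system on ℝ³×ℝ³ associated with
`g*(x,ξ) = ξ₁² + (ξ₂ - x₁ξ₃)²`, on a set `I` of times. -/
def HeisenbergBichar (x₁ x₂ x₃ ξ₁ ξ₂ ξ₃ : ℝ → ℝ) (I : Set ℝ) : Prop :=
  ∀ t ∈ I,
    HasDerivAt x₁ (2 * ξ₁ t) t ∧
    HasDerivAt x₂ (2 * (ξ₂ t - x₁ t * ξ₃ t)) t ∧
    HasDerivAt x₃ (-2 * x₁ t * (ξ₂ t - x₁ t * ξ₃ t)) t ∧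
    HasDerivAt ξ₁ (2 * ξ₃ t * (ξ₂ t - x₁ t * ξ₃ t)) t ∧
    HasDerivAt ξ₂ 0 t ∧
    HasDerivAt ξ₃ 0 t

/-- The explicit curves with constants ξ₂, ξ₃ ≠ 0, φ, B, C define a global solution of the
Heisenberg bicharacteristic system with `g* ≡ 1/4`. -/
theorem stmt_3 (ξ₂ ξ₃ φ B C : ℝ) (hξ₃ : ξ₃ ≠ 0) :
    HeisenbergBichar
      (fun t => 1 / (2 * ξ₃) * Real.cos (2 * ξ₃ * t + φ) + ξ₂ / ξ₃)
      (fun t => B - 1 / (2 * ξ₃) * Real.sin (2 * ξ₃ * t + φ))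
      (fun t => C + t / (4 * ξ₃) + 1 / (16 * ξ₃ ^ 2) * Real.sin (2 * (2 * ξ₃ * t + φ))
          + ξ₂ / (2 * ξ₃ ^ 2) * Real.sin (2 * ξ₃ * t + φ))
      (fun t => -(1 / 2) * Real.sin (2 * ξ₃ * t + φ))
      (fun _ => ξ₂)
      (fun _ => ξ₃)
      Set.univ ∧
    ∀ t : ℝ,
      (-(1 / 2) * Real.sin (2 * ξ₃ * t + φ)) ^ 2 +
        (ξ₂ - (1 / (2 * ξ₃) * Real.cos (2 * ξ₃ * t + φ) + ξ₂ / ξ₃) * ξ₃) ^ 2 = 1 / 4 := by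
  have key : ∀ t : ℝ,
      ξ₂ - (1 / (2 * ξ₃) * Real.cos (2 * ξ₃ * t + φ) + ξ₂ / ξ₃) * ξ₃
        = -(1 / 2) * Real.cos (2 * ξ₃ * t + φ) := by
    intro t; field_simp; ring
  constructor
  · intro t _
    have hθ : HasDerivAt (fun t : ℝ => 2 * ξ₃ * t + φ) (2 * ξ₃) t := by
      simpa using ((hasDerivAt_id t).const_mul (2 * ξ₃)).add_const φ
    have hcos : HasDerivAt (fun t : ℝ => Real.cos (2 * ξ₃ * t + φ))
        (-Real.sin (2 * ξ₃ * t + φ) * (2 * ξ₃)) t := (Real.hasDerivAt_cos _).comp t hθ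
    have hsin : HasDerivAt (fun t : ℝ => Real.sin (2 * ξ₃ * t + φ))
        (Real.cos (2 * ξ₃ * t + φ) * (2 * ξ₃)) t := (Real.hasDerivAt_sin _).comp t hθ
    have h2θ : HasDerivAt (fun t : ℝ => 2 * (2 * ξ₃ * t + φ)) (2 * (2 * ξ₃)) t :=
      hθ.const_mul 2
    have hsin2 : HasDerivAt (fun t : ℝ => Real.sin (2 * (2 * ξ₃ * t + φ)))
        (Real.cos (2 * (2 * ξ₃ * t + φ)) * (2 * (2 * ξ₃))) t :=
      (Real.hasDerivAt_sin _).comp t h2θ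
    refine ⟨?_, ?_, ?_, ?_, hasDerivAt_const _ _, hasDerivAt_const _ _⟩
    · have := (hcos.const_mul (1 / (2 * ξ₃))).add_const (ξ₂ / ξ₃)
      convert this using 1
      · rfl
      · rfl
      field_simp
    · have := (hasDerivAt_const t B).sub (hsin.const_mul (1 / (2 * ξ₃)))
      rw [key t]
      convert this using 1
      · rfl
      · rfl
      · rfl
      field_simp; ring
    · have ht : HasDerivAt (fun t : ℝ => t / (4 * ξ₃)) (1 / (4 * ξ₃)) t := by
        simpa using (hasDerivAt_id t).div_const (4 * ξ₃)
      have := (((hasDerivAt_const t C).add ht).add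
        (hsin2.const_mul (1 / (16 * ξ₃ ^ 2)))).add
        (hsin.const_mul (ξ₂ / (2 * ξ₃ ^ 2)))
      rw [key t]
      convert this using 1
      · rfl
      · rfl
      · rfl
      rw [Real.cos_two_mul]
      field_simp; ring
    · have := hsin.const_mul (-(1 / 2))
      rw [key t]
      convert this using 1
      · rfl
      · rfl
      ring
  · intro t
    rw [key t]
    have := Real.sin_sq_add_cos_sq (2 * ξ₃ * t + φ)
    nlinarith [this]
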